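/- (Monotonicity of the height function) For every two-colored admissible configuration C on [1,X]×[1,Y] with second-color boundary data, one has H¹(C) ≤ H²(C), where H¹(C) := Σ_{a=1}^X k(a,Y)₁ is the number of first-color lines exiting the top boundary, and H²(C) := Σ_{b=1}^Y j(1,b)₂ + Σ_{a=1}^X ((k(a,Y)₁ + k(a,Y)₂) mod 2) is the number of second-color lines entering the left boundary plus the number of columns whose top output has an odd total number of lines. -/

import Mathlib

/-- Exponents of the indeterminates `b₁` (resp. `b₂`) appearing in a formal weight:
`e` for exponent zero (factor `1`), `pl` for the factor `bᵢ`, `mi` for the factor `1 - bᵢ`. -/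
inductive Eps : Type
  | e : Eps
  | pl : Eps
  | mi : Eps
deriving DecidableEq

instance : Fintype Eps := ⟨{Eps.e, Eps.pl, Eps.mi}, fun x => by cases x <;> simp⟩

/-- The 10-element set of formal weights: `none` represents `0`, and `some (ε₁, ε₂)`
represents the monomial `f₁(ε₁) f₂(ε₂)`. -/
abbrev Wt : Type := Option (Eps × Eps)

/-- The join operation on exponents: `a ∨ a = a`, `e ∨ a = a ∨ e = a`, and the
clash `{+, −}` gives `none` (i.e. the factor `0`). -/
def Eps.vee : Eps → Eps → Option Eps
  | .e, a => some a
  | a, .e => some a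
  | .pl, .pl => some .pl
  | .mi, .mi => some .mi
  | .pl, .mi => none
  | .mi, .pl => none

/-- The Boolean-type product `*` on the formal weight set `Wt`. -/
def wmul : Wt → Wt → Wt
  | none, _ => none
  | _, none => none
  | some (a₁, a₂), some (c₁, c₂) =>
    match a₁.vee c₁, a₂.vee c₂ with
    | some x, some y => some (x, y)
    | _, _ => none

/-- Evaluation of an exponent of `b₁`: `f₁(e) = 1`, `f₁(+) = b₁`, `f₁(−) = 1 - b₁`. -/
def f1 (b1 : ℝ) : Eps → ℝ
  | .e => 1
  | .pl => b1
  | .mi => 1 - b1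

/-- Evaluation of an exponent of `b₂`: `f₂(e) = 1`, `f₂(+) = b₂`, `f₂(−) = 1 - b₂`. -/
def f2 (b2 : ℝ) : Eps → ℝ
  | .e => 1
  | .pl => b2
  | .mi => 1 - b2

/-- The evaluation map `ev_{b₁,b₂} : W → ℝ`. -/
def ev (b1 b2 : ℝ) : Wt → ℝ
  | none => 0
  | some (x, y) => f1 b1 x * f2 b2 y

/-- The formal one-colored vertex weights `L̂¹(i, j; k, l) ∈ W`
(`i` = bottom input, `j` = left input, `k` = top output, `l` = right output,
with `true` standing for `1`). -/
def Lhat1 : Bool → Bool → Bool → Bool → Wt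
  | true, false, true, false => some (.e, .e)
  | false, true, false, true => some (.e, .e)
  | false, false, false, false => some (.e, .pl)
  | false, false, true, true => some (.e, .mi)
  | true, true, true, true => some (.pl, .e)
  | true, true, false, false => some (.mi, .e)
  | _, _, _, _ => none

/-- The `r`-fold projection `s_r(x) = (x₁ + ⋯ + x_r) mod 2` of a vector `x ∈ {0,1}ⁿ`
(here `r : Fin n` stands for the `1`-indexed level `r + 1`). -/
def sproj {n : ℕ} (x : Fin n → Bool) (r : Fin n) : Bool :=
  decide ((∑ t ∈ Finset.univ.filter (fun t : Fin n => t ≤ r),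
    (if x t then (1 : ℕ) else 0)) % 2 = 1)

/-- The formal `n`-colored vertex weight
`L̂ⁿ(i, j; k, l) = ∏*_{r=1}^n L̂¹(s_r(i), s_r(j); s_r(k), s_r(l)) ∈ W`,
where the product is taken with respect to the Boolean-type product `*`. -/
def Lhatn {n : ℕ} (i j k l : Fin n → Bool) : Wt :=
  (List.ofFn (fun r : Fin n =>
    Lhat1 (sproj i r) (sproj j r) (sproj k r) (sproj l r))).foldr wmul (some (.e, .e))

/-- The real `n`-colored vertex weight `Lⁿ(i, j; k, l) = ev_{b₁,b₂}(L̂ⁿ(i, j; k, l))`. -/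
def Ln (b1 b2 : ℝ) {n : ℕ} (i j k l : Fin n → Bool) : ℝ :=
  ev b1 b2 (Lhatn i j k l)

/-- Encode a pair of colored occupation numbers (first color, second color)
as a vector in `{0,1}²`. -/
def pairVec (p : Bool × Bool) : Fin 2 → Bool := ![p.1, p.2]

/-- Potential on vertical edges: `1` iff both colors present. -/
def Gv (x : Bool × Bool) : ℕ := if x.1 && x.2 then 1 else 0

/-- Potential on horizontal edges: `1` iff only the second color is present. -/
def Hl (x : Bool × Bool) : ℕ := if !x.1 && x.2 then 1 else 0

lemma vertex_ineq : ∀ i j k l : Bool × Bool,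
    Lhatn (pairVec i) (pairVec j) (pairVec k) (pairVec l) ≠ (none : Wt) →
    Gv k + Hl l ≤ Gv i + Hl j := by decide

lemma top_bound (x : Bool × Bool) :
    (if x.1 then (1 : ℕ) else 0) ≤
      ((if x.1 then (1 : ℕ) else 0) + (if x.2 then (1 : ℕ) else 0)) % 2 + Gv x := by
  rcases x with ⟨a, b⟩; cases a <;> cases b <;> simp [Gv]

/-- Monotonicity of the height function: for every two-colored admissible configuration
on `[1,X] × [1,Y]` with second-color boundary data, the number `H¹` of first-color lines
exiting the top boundary is at most `H²`, the number of second-color lines entering the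
left boundary plus the number of columns whose top output carries an odd number of lines. -/
theorem two_colored_height_monotonicity
    (X Y : ℕ) (hX : 1 ≤ X) (hY : 1 ≤ Y)
    (ii jj kk ll : ℕ → ℕ → Bool × Bool)
    (hcompatV : ∀ a b, 1 ≤ a → a ≤ X → 1 ≤ b → b < Y → ii a (b + 1) = kk a b)
    (hcompatH : ∀ a b, 1 ≤ a → a < X → 1 ≤ b → b ≤ Y → jj (a + 1) b = ll a b)
    (hbdB : ∀ a, 1 ≤ a → a ≤ X → (ii a 1).1 = false)
    (hbdL : ∀ b, 1 ≤ b → b ≤ Y → (jj 1 b).1 = false)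
    (hadm : ∀ a b, 1 ≤ a → a ≤ X → 1 ≤ b → b ≤ Y →
      Lhatn (pairVec (ii a b)) (pairVec (jj a b)) (pairVec (kk a b)) (pairVec (ll a b))
        ≠ (none : Wt)) :
    (∑ a ∈ Finset.Icc 1 X, (if (kk a Y).1 then (1 : ℕ) else 0)) ≤
      (∑ b ∈ Finset.Icc 1 Y, (if (jj 1 b).2 then (1 : ℕ) else 0)) +
        ∑ a ∈ Finset.Icc 1 X,
          (((if (kk a Y).1 then (1 : ℕ) else 0) + (if (kk a Y).2 then (1 : ℕ) else 0)) % 2) := by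
  -- Row lemma: telescoping along a row
  have row : ∀ b, 1 ≤ b → b ≤ Y → ∀ a, 1 ≤ a → a ≤ X →
      (∑ a' ∈ Finset.Icc 1 a, Gv (kk a' b)) + Hl (ll a b) ≤
        (∑ a' ∈ Finset.Icc 1 a, Gv (ii a' b)) + Hl (jj 1 b) := by
    intro b hb1 hbY a ha1 haX
    induction a with
    | zero => omega
    | succ a ih =>
      rcases Nat.eq_or_lt_of_le ha1 with h1 | h1
      · simp only [← h1]
        simp only [Finset.Icc_self, Finset.sum_singleton]
        have := vertex_ineq (ii 1 b) (jj 1 b) (kk 1 b) (ll 1 b)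
          (hadm 1 b le_rfl (by omega) hb1 hbY)
        omega
      · have ha : 1 ≤ a := by omega
        have haX' : a ≤ X := by omega
        have ihh := ih ha haX'
        have hv := vertex_ineq (ii (a+1) b) (jj (a+1) b) (kk (a+1) b) (ll (a+1) b)
          (hadm (a+1) b (by omega) haX hb1 hbY)
        have hH : jj (a+1) b = ll a b := hcompatH a b ha (by omega) hb1 hbY
        rw [Finset.sum_Icc_succ_top (by omega : 1 ≤ a + 1),
            Finset.sum_Icc_succ_top (by omega : 1 ≤ a + 1)]
        rw [hH] at hv
        omega
  -- Column telescoping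
  have col : ∀ b, 1 ≤ b → b ≤ Y →
      (∑ a ∈ Finset.Icc 1 X, Gv (kk a b)) + (∑ b' ∈ Finset.Icc 1 b, Hl (ll X b')) ≤
        ∑ b' ∈ Finset.Icc 1 b, Hl (jj 1 b') := by
    intro b hb1 hbY
    induction b with
    | zero => omega
    | succ b ih =>
      have bot0 : ∀ a ∈ Finset.Icc 1 X, Gv (ii a 1) = 0 := by
        intro a ha
        simp only [Finset.mem_Icc] at ha
        have := hbdB a ha.1 ha.2
        simp [Gv, this]
      rcases Nat.eq_or_lt_of_le hb1 with h1 | h1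
      · simp only [← h1] at *
        simp only [Finset.Icc_self, Finset.sum_singleton]
        have hr := row 1 le_rfl hY X hX le_rfl
        rw [Finset.sum_eq_zero bot0] at hr
        omega
      · have hb : 1 ≤ b := by omega
        have hbY' : b ≤ Y := by omega
        have ihh := ih hb hbY'
        have hr := row (b+1) (by omega) hbY X hX le_rfl
        have hii : ∀ a ∈ Finset.Icc 1 X, Gv (ii a (b+1)) = Gv (kk a b) := by
          intro a ha
          simp only [Finset.mem_Icc] at ha
          rw [hcompatV a b ha.1 ha.2 hb (by omega)]
        rw [Finset.sum_congr rfl hii] at hr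
        rw [Finset.sum_Icc_succ_top (by omega : 1 ≤ b + 1),
            Finset.sum_Icc_succ_top (by omega : 1 ≤ b + 1)]
        omega
  have hcol := col Y hY le_rfl
  have hleft : ∀ b' ∈ Finset.Icc 1 Y, Hl (jj 1 b') = (if (jj 1 b').2 then (1 : ℕ) else 0) := by
    intro b' hb'
    simp only [Finset.mem_Icc] at hb'
    have := hbdL b' hb'.1 hb'.2
    simp [Hl, this]
  rw [Finset.sum_congr rfl hleft] at hcol
  calc (∑ a ∈ Finset.Icc 1 X, (if (kk a Y).1 then (1 : ℕ) else 0))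
      ≤ ∑ a ∈ Finset.Icc 1 X,
          ((((if (kk a Y).1 then (1 : ℕ) else 0) + (if (kk a Y).2 then (1 : ℕ) else 0)) % 2)
            + Gv (kk a Y)) := Finset.sum_le_sum (fun a _ => top_bound (kk a Y))
    _ = (∑ a ∈ Finset.Icc 1 X,
          (((if (kk a Y).1 then (1 : ℕ) else 0) + (if (kk a Y).2 then (1 : ℕ) else 0)) % 2))
          + ∑ a ∈ Finset.Icc 1 X, Gv (kk a Y) := Finset.sum_add_distrib
    _ ≤ (∑ a ∈ Finset.Icc 1 X,
          (((if (kk a Y).1 then (1 : ℕ) else 0) + (if (kk a Y).2 then (1 : ℕ) else 0)) % 2))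
          + ∑ b ∈ Finset.Icc 1 Y, (if (jj 1 b).2 then (1 : ℕ) else 0) := by omega
    _ = _ := by omega
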